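/- Every positive solution (a_n), (b_n) of the string system satisfies lim_{n→∞} a_n / n^{2/3} = 1/(2·3^{2/3}) and lim_{n→∞} b_n / n^{1/3} = 3^{−1/3}. -/

import Mathlib

open Filter

private lemma stmt8_cube_le {x y : ℝ} (hy : 0 ≤ y) (h : x ^ 3 ≤ y ^ 3) : x ≤ y := by
  by_contra hxy
  push_neg at hxy
  have := pow_lt_pow_left₀ hxy hy (by norm_num : 3 ≠ 0)
  linarith

set_option maxHeartbeats 4000000 in
/-- Every positive solution of the string system satisfies
`aₙ/n^{2/3} → 1/(2·3^{2/3})` and `bₙ/n^{1/3} → 3^{−1/3}`. -/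
theorem stmt8 (a b : ℕ → ℝ) (ha0 : a 0 = 0)
    (hapos : ∀ n : ℕ, 0 < a (n + 1)) (hbpos : ∀ n : ℕ, 0 < b n)
    (h1 : ∀ n : ℕ, a n + a (n + 1) = (b n) ^ 2)
    (h2 : ∀ n : ℕ, 1 ≤ n → 3 * a n * (b n + b (n - 1)) = (n : ℝ)) :
    Filter.Tendsto (fun n : ℕ => a n / (n : ℝ) ^ ((2 : ℝ) / 3)) Filter.atTop
      (nhds (1 / (2 * (3 : ℝ) ^ ((2 : ℝ) / 3)))) ∧
    Filter.Tendsto (fun n : ℕ => b n / (n : ℝ) ^ ((1 : ℝ) / 3)) Filter.atTop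
      (nhds ((3 : ℝ) ^ (-(1 : ℝ) / 3))) := by
  -- the cube-root sequence
  set p : ℕ → ℝ := fun n => (n : ℝ) ^ ((1 : ℝ) / 3) with hpdef
  have hp0 : ∀ n, 0 ≤ p n := fun n => Real.rpow_nonneg (Nat.cast_nonneg n) _
  have hp3 : ∀ n, p n ^ 3 = (n : ℝ) := by
    intro n
    show (((n : ℝ) ^ ((1 : ℝ) / 3)) ^ (3 : ℕ)) = (n : ℝ)
    rw [← Real.rpow_natCast ((n : ℝ) ^ ((1 : ℝ) / 3)) 3, ← Real.rpow_mul (Nat.cast_nonneg n)]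
    norm_num
  have hq : ∀ n : ℕ, (n : ℝ) ^ ((2 : ℝ) / 3) = p n ^ 2 := by
    intro n
    show (n : ℝ) ^ ((2 : ℝ) / 3) = ((n : ℝ) ^ ((1 : ℝ) / 3)) ^ (2 : ℕ)
    rw [← Real.rpow_natCast ((n : ℝ) ^ ((1 : ℝ) / 3)) 2, ← Real.rpow_mul (Nat.cast_nonneg n)]
    norm_num
  have hpm : ∀ {m n : ℕ}, m ≤ n → p m ≤ p n := by
    intro m n h
    exact Real.rpow_le_rpow (Nat.cast_nonneg m) (by exact_mod_cast h) (by norm_num)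
  have hpge1 : ∀ n : ℕ, 1 ≤ n → 1 ≤ p n := by
    intro n hn
    apply stmt8_cube_le (hp0 n)
    rw [hp3]
    norm_num
    exact_mod_cast hn
  have hppos : ∀ n : ℕ, 1 ≤ n → 0 < p n := fun n hn => lt_of_lt_of_le one_pos (hpge1 n hn)
  have han : ∀ n, 0 ≤ a n := by
    intro n
    cases n with
    | zero => simp [ha0]
    | succ k => exact (hapos k).le
  have hap : ∀ n : ℕ, 1 ≤ n → 0 < a n := by
    intro n hn
    obtain ⟨k, rfl⟩ := Nat.exists_eq_add_of_le hn
    simpa [Nat.add_comm] using hapos k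
  -- upper bound : a n ≤ p n ^ 2
  have haub : ∀ n, a n ≤ p n ^ 2 := by
    intro n
    rcases Nat.eq_zero_or_pos n with rfl | hn
    · rw [ha0]; positivity
    · have h2n := h2 n hn
      have hb1 : a n ≤ b n ^ 2 := by
        have := h1 n
        nlinarith [hapos n]
      have hb2 : a n ≤ b (n - 1) ^ 2 := by
        have e := h1 (n - 1)
        rw [Nat.sub_add_cancel hn] at e
        nlinarith [han (n - 1)]
      have hbn := hbpos n
      have hbn' := hbpos (n - 1)
      have hA := hap n hn
      have hBB : a n ≤ b n * b (n - 1) := by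
        nlinarith [mul_le_mul hb1 hb2 hA.le (sq_nonneg (b n)), mul_pos hbn hbn']
      have h4A : 4 * a n ≤ (b n + b (n - 1)) ^ 2 := by nlinarith
      have hn2 : (n : ℝ) ^ 2 = 9 * a n ^ 2 * (b n + b (n - 1)) ^ 2 := by
        rw [← h2n]; ring
      have hcube : 36 * a n ^ 3 ≤ (n : ℝ) ^ 2 := by nlinarith [sq_nonneg (a n)]
      apply stmt8_cube_le (by positivity : (0 : ℝ) ≤ p n ^ 2)
      have hpn6 : (p n ^ 2) ^ 3 = (n : ℝ) ^ 2 := by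
        rw [show (p n ^ 2) ^ 3 = (p n ^ 3) ^ 2 by ring, hp3]
      nlinarith
  -- upper bound for b
  have hbub : ∀ n, b n ≤ 2 * p (n + 1) := by
    intro n
    have e := h1 n
    have h1' := haub n
    have h2' := haub (n + 1)
    have hmono : p n ≤ p (n + 1) := hpm (Nat.le_succ n)
    have hsq : b n ^ 2 ≤ (2 * p (n + 1)) ^ 2 := by nlinarith [hp0 n, hp0 (n + 1)]
    exact le_of_pow_le_pow_left₀ (by norm_num) (by positivity) hsq
  have hp2 : ∀ n : ℕ, 1 ≤ n → p (n + 1) ≤ 2 * p n := by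
    intro n hn
    apply stmt8_cube_le (by positivity : (0 : ℝ) ≤ 2 * p n)
    rw [show (2 * p n) ^ 3 = 8 * p n ^ 3 by ring, hp3, hp3]
    have : (1 : ℝ) ≤ (n : ℝ) := by exact_mod_cast hn
    push_cast
    linarith
  -- lower bound : p n ^ 2 / 18 ≤ a n
  have halb : ∀ n : ℕ, 1 ≤ n → p n ^ 2 / 18 ≤ a n := by
    intro n hn
    have hsum : b n + b (n - 1) ≤ 6 * p n := by
      have e1 := hbub n
      have e2 : b (n - 1) ≤ 2 * p n := by
        have := hbub (n - 1)
        rwa [Nat.sub_add_cancel hn] at this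
      have := hp2 n hn
      linarith
    have h2n := h2 n hn
    have hA := hap n hn
    have hpn := hppos n hn
    have hkey : (n : ℝ) ≤ 18 * a n * p n := by nlinarith
    have h3 : p n ^ 2 * p n ≤ (18 * a n) * p n := by
      rw [show p n ^ 2 * p n = p n ^ 3 by ring, hp3]
      linarith
    have := le_of_mul_le_mul_right h3 hpn
    linarith
  -- the normalized sequence u
  set u : ℕ → ℝ := fun n : ℕ => a n / (n : ℝ) ^ ((2 : ℝ) / 3) with hudef
  have hu_ub : ∀ n : ℕ, 1 ≤ n → u n ≤ 1 := by
    intro n hn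
    show a n / (n : ℝ) ^ ((2 : ℝ) / 3) ≤ 1
    rw [hq n]
    rw [div_le_one (by positivity : (0:ℝ) < p n ^ 2)]
    exact haub n
  have hu_lb : ∀ n : ℕ, 1 ≤ n → 1 / 18 ≤ u n := by
    intro n hn
    show 1 / 18 ≤ a n / (n : ℝ) ^ ((2 : ℝ) / 3)
    rw [hq n]
    rw [le_div_iff₀ (by positivity : (0:ℝ) < p n ^ 2)]
    have := halb n hn
    linarith
  have hev_ub : ∀ᶠ n in atTop, u n ≤ 1 := eventually_atTop.2 ⟨1, hu_ub⟩
  have hev_lb : ∀ᶠ n in atTop, (1:ℝ) / 18 ≤ u n := eventually_atTop.2 ⟨1, hu_lb⟩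
  have hBddle : IsBoundedUnder (· ≤ ·) atTop u := ⟨1, by simpa [eventually_map] using hev_ub⟩
  have hBddge : IsBoundedUnder (· ≥ ·) atTop u :=
    ⟨1 / 18, by simpa [eventually_map] using hev_lb⟩
  set L : ℝ := limsup u atTop with hLdef
  set l : ℝ := liminf u atTop with hldef
  have hL1 : L ≤ 1 := limsup_le_of_le hBddge.isCoboundedUnder_le hev_ub
  have hl18 : 1 / 18 ≤ l := le_liminf_of_le hBddle.isCoboundedUnder_ge hev_lb
  have hlL : l ≤ L := liminf_le_limsup hBddle hBddge
  have hl0 : 0 < l := by linarith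
  have hL0 : 0 < L := by linarith
  -- Step A : (1-ε)² ≤ 72 l² (L+ε)
  have hA : ∀ ε : ℝ, 0 < ε → ε < 1 → (1 - ε) ^ 2 ≤ 72 * l ^ 2 * (L + ε) := by
    intro ε hε hε1
    have hLε0 : 0 < L + ε := by linarith
    set s : ℝ := Real.sqrt (2 * (L + ε)) with hsdef
    have hs0 : 0 < s := Real.sqrt_pos.2 (by linarith)
    have hs2 : s ^ 2 = 2 * (L + ε) := Real.sq_sqrt (by linarith)
    have hev : ∀ᶠ n in atTop, u n < L + ε :=
      eventually_lt_of_limsup_lt (by linarith) hBddle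
    obtain ⟨N, hN⟩ := eventually_atTop.1 hev
    have haU : ∀ k : ℕ, N ≤ k → 1 ≤ k → a k ≤ (L + ε) * p k ^ 2 := by
      intro k hk hk1
      have h := hN k hk
      have hpk : 0 < p k ^ 2 := by have := hppos k hk1; positivity
      have : a k / (k : ℝ) ^ ((2 : ℝ) / 3) < L + ε := h
      rw [hq k, div_lt_iff₀ hpk] at this
      nlinarith
    have hbU : ∀ k : ℕ, N ≤ k → 1 ≤ k → b k ≤ s * p (k + 1) := by
      intro k hk hk1
      have e1 := h1 k
      have ha1 := haU k hk hk1
      have ha2 := haU (k + 1) (le_trans hk (Nat.le_succ k)) (by omega)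
      have hmono : p k ≤ p (k + 1) := hpm (Nat.le_succ k)
      have hsq : b k ^ 2 ≤ (s * p (k + 1)) ^ 2 := by
        have hexp : (s * p (k + 1)) ^ 2 = 2 * (L + ε) * p (k + 1) ^ 2 := by
          rw [mul_pow, hs2]
        nlinarith [hp0 k, hp0 (k + 1), hexp, e1, ha1, ha2,
          mul_le_mul_of_nonneg_left (mul_self_le_mul_self (hp0 k) hmono) hLε0.le]
      exact le_of_pow_le_pow_left₀ (by norm_num) (by positivity) hsq
    obtain ⟨M, hM⟩ := exists_nat_ge ((1 : ℝ) / ε)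
    have hkey : ∀ᶠ n in atTop, (1 - ε) / (6 * s) ≤ u n := by
      refine eventually_atTop.2 ⟨N + M + 2, ?_⟩
      intro n hn
      have hn1 : 1 ≤ n := by omega
      have hb1 : b n ≤ s * p (n + 1) := hbU n (by omega) hn1
      have hb2 : b (n - 1) ≤ s * p n := by
        have := hbU (n - 1) (by omega) (by omega)
        rwa [Nat.sub_add_cancel hn1] at this
      have hmono : p n ≤ p (n + 1) := hpm (Nat.le_succ n)
      have hsum : b n + b (n - 1) ≤ 2 * s * p (n + 1) := by
        have := mul_le_mul_of_nonneg_left hmono hs0.le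
        linarith
      have h2n := h2 n hn1
      have hA0 := hap n hn1
      have hge : (n : ℝ) ≤ 6 * s * p (n + 1) * a n := by
        have h' : (3 * a n) * (b n + b (n - 1)) ≤ (3 * a n) * (2 * s * p (n + 1)) :=
          mul_le_mul_of_nonneg_left hsum (by positivity)
        nlinarith [h', h2n]
      have hfrac : (1 - ε) * p (n + 1) ≤ p n := by
        apply stmt8_cube_le (hp0 n)
        rw [mul_pow, hp3, hp3]
        have hMn : (1 : ℝ) / ε ≤ (n : ℝ) := le_trans hM (by exact_mod_cast (by omega : M ≤ n))
        have h1n : 1 ≤ ε * ((n : ℝ) + 1) := by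
          have := (div_le_iff₀ hε).1 hMn
          nlinarith
        have hc : (1 - ε) ^ 3 ≤ 1 - ε := by nlinarith [sq_nonneg (1 - ε)]
        push_cast
        nlinarith [Nat.cast_nonneg (α := ℝ) n]
      have hp1 : 0 < p (n + 1) := hppos (n + 1) (by omega)
      have hfin : (1 - ε) * p n ^ 2 ≤ 6 * s * a n := by
        have h3 : p n ^ 2 * ((1 - ε) * p (n + 1)) ≤ p n ^ 2 * p n :=
          mul_le_mul_of_nonneg_left hfrac (sq_nonneg _)
        have h4 : p n ^ 2 * p n = (n : ℝ) := by
          rw [show p n ^ 2 * p n = p n ^ 3 by ring, hp3]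
        have h5 : ((1 - ε) * p n ^ 2) * p (n + 1) ≤ (6 * s * a n) * p (n + 1) := by nlinarith
        exact le_of_mul_le_mul_right h5 hp1
      show (1 - ε) / (6 * s) ≤ a n / (n : ℝ) ^ ((2 : ℝ) / 3)
      rw [hq n, div_le_div_iff₀ (by positivity) (by positivity : (0:ℝ) < p n ^ 2)]
      nlinarith [hfin]
    have hll : (1 - ε) / (6 * s) ≤ l := le_liminf_of_le hBddle.isCoboundedUnder_ge hkey
    have h6 : 1 - ε ≤ 6 * s * l := by
      have := (div_le_iff₀ (by positivity : (0 : ℝ) < 6 * s)).1 hll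
      linarith
    nlinarith [mul_le_mul h6 h6 (by linarith) (by positivity : (0:ℝ) ≤ 6 * s * l)]
  -- Step B : 72 L² (l-ε) ≤ (1+ε)²
  have hB : ∀ ε : ℝ, 0 < ε → ε < 1 / 18 → 72 * L ^ 2 * (l - ε) ≤ (1 + ε) ^ 2 := by
    intro ε hε hε1
    have hlε0 : 0 < l - ε := by linarith
    set t : ℝ := Real.sqrt (2 * (l - ε)) with htdef
    have ht0 : 0 < t := Real.sqrt_pos.2 (by linarith)
    have ht2 : t ^ 2 = 2 * (l - ε) := Real.sq_sqrt (by linarith)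
    have hev : ∀ᶠ n in atTop, l - ε < u n :=
      eventually_lt_of_lt_liminf (by linarith) hBddge
    obtain ⟨N, hN⟩ := eventually_atTop.1 hev
    have haL : ∀ k : ℕ, N ≤ k → 1 ≤ k → (l - ε) * p k ^ 2 ≤ a k := by
      intro k hk hk1
      have h := hN k hk
      have hpk : 0 < p k ^ 2 := by have := hppos k hk1; positivity
      have : l - ε < a k / (k : ℝ) ^ ((2 : ℝ) / 3) := h
      rw [hq k, lt_div_iff₀ hpk] at this
      nlinarith
    have hbL : ∀ k : ℕ, N ≤ k → 1 ≤ k → t * p k ≤ b k := by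
      intro k hk hk1
      have e1 := h1 k
      have ha1 := haL k hk hk1
      have ha2 := haL (k + 1) (le_trans hk (Nat.le_succ k)) (by omega)
      have hmono : p k ≤ p (k + 1) := hpm (Nat.le_succ k)
      have hsq : (t * p k) ^ 2 ≤ b k ^ 2 := by
        have hexp : (t * p k) ^ 2 = 2 * (l - ε) * p k ^ 2 := by rw [mul_pow, ht2]
        nlinarith [hp0 k, hp0 (k + 1), hexp, e1, ha1, ha2,
          mul_le_mul_of_nonneg_left (mul_self_le_mul_self (hp0 k) hmono) hlε0.le]
      exact le_of_pow_le_pow_left₀ (by norm_num) (hbpos k).le hsq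
    obtain ⟨M, hM⟩ := exists_nat_ge ((1 : ℝ) / ε)
    have hkey : ∀ᶠ n in atTop, u n ≤ (1 + ε) / (6 * t) := by
      refine eventually_atTop.2 ⟨N + M + 2, ?_⟩
      intro n hn
      have hn1 : 1 ≤ n := by omega
      have hb1 : t * p n ≤ b n := hbL n (by omega) hn1
      have hb2 : t * p (n - 1) ≤ b (n - 1) := hbL (n - 1) (by omega) (by omega)
      have h2n := h2 n hn1
      have hA0 := hap n hn1
      have hpn := hppos n hn1
      have hpn1 : 0 < p (n - 1) := hppos (n - 1) (by omega)
      -- n ≥ 6 t p(n-1) a n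
      have hmono : p (n - 1) ≤ p n := hpm (by omega)
      have hge : 6 * t * p (n - 1) * a n ≤ (n : ℝ) := by
        have hsum : 2 * t * p (n - 1) ≤ b n + b (n - 1) := by
          have := mul_le_mul_of_nonneg_left hmono ht0.le
          linarith
        have h' : (3 * a n) * (2 * t * p (n - 1)) ≤ (3 * a n) * (b n + b (n - 1)) :=
          mul_le_mul_of_nonneg_left hsum (by positivity)
        nlinarith [h', h2n]
      -- p n ≤ (1+ε) p (n-1)
      have hfrac : p n ≤ (1 + ε) * p (n - 1) := by
        apply stmt8_cube_le (by positivity)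
        rw [mul_pow, hp3, hp3]
        have hMn : (1 : ℝ) / ε ≤ ((n : ℕ) : ℝ) - 1 := by
          have : (M : ℝ) ≤ (n : ℝ) - 1 := by
            have : (M : ℝ) + 1 ≤ (n : ℝ) := by exact_mod_cast (by omega : M + 1 ≤ n)
            linarith
          linarith [hM]
        have hcast : ((n - 1 : ℕ) : ℝ) = (n : ℝ) - 1 := by
          have : (1 : ℕ) ≤ n := hn1
          push_cast [Nat.cast_sub this]
          ring
        rw [hcast]
        have h1n : 1 ≤ ε * ((n : ℝ) - 1) := by
          have := (div_le_iff₀ hε).1 hMn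
          nlinarith
        have hc : 1 + ε ≤ (1 + ε) ^ 3 := by nlinarith [sq_nonneg (1 + ε), sq_nonneg ε]
        nlinarith [hε.le, (show (1:ℝ) ≤ (n:ℝ) by exact_mod_cast hn1)]
      have hfin : 6 * t * a n ≤ (1 + ε) * p n ^ 2 := by
        have h4 : p n ^ 2 * p n = (n : ℝ) := by
          rw [show p n ^ 2 * p n = p n ^ 3 by ring, hp3]
        have h5 : (6 * t * a n) * p n ≤ ((1 + ε) * p n ^ 2) * p n := by
          have e1 : (6 * t * a n) * p n ≤ (6 * t * a n) * ((1 + ε) * p (n - 1)) :=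
            mul_le_mul_of_nonneg_left hfrac (by positivity)
          have e2 : (6 * t * a n) * ((1 + ε) * p (n - 1)) = (1 + ε) * (6 * t * p (n - 1) * a n) := by
            ring
          have e3 : (1 + ε) * (6 * t * p (n - 1) * a n) ≤ (1 + ε) * (n : ℝ) :=
            mul_le_mul_of_nonneg_left hge (by linarith)
          calc (6 * t * a n) * p n ≤ (1 + ε) * (6 * t * p (n - 1) * a n) := by rw [← e2]; exact e1
            _ ≤ (1 + ε) * (n : ℝ) := e3
            _ = ((1 + ε) * p n ^ 2) * p n := by rw [← h4]; ring
        exact le_of_mul_le_mul_right h5 hpn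
      show a n / (n : ℝ) ^ ((2 : ℝ) / 3) ≤ (1 + ε) / (6 * t)
      rw [hq n, div_le_div_iff₀ (by positivity : (0:ℝ) < p n ^ 2) (by positivity)]
      nlinarith [hfin]
    have hLL : L ≤ (1 + ε) / (6 * t) := limsup_le_of_le hBddge.isCoboundedUnder_le hkey
    have h6 : 6 * t * L ≤ 1 + ε := by
      have := (le_div_iff₀ (by positivity : (0 : ℝ) < 6 * t)).1 hLL
      linarith
    nlinarith [mul_le_mul h6 h6 (by positivity : (0:ℝ) ≤ 6 * t * L) (by linarith)]
  -- Step C : 1 ≤ 72 l² L  and  72 L² l ≤ 1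
  have hC1 : 1 ≤ 72 * l ^ 2 * L := by
    by_contra hcon
    push_neg at hcon
    set δ : ℝ := 1 - 72 * l ^ 2 * L with hδdef
    have hδ0 : 0 < δ := by linarith
    set K : ℝ := 2 + 72 * l ^ 2 with hKdef
    have hK0 : 0 < K := by nlinarith [sq_nonneg l]
    set ε : ℝ := min (1 / 2) (δ / (2 * K)) with hεdef
    have hε0 : 0 < ε := lt_min (by norm_num) (by positivity)
    have hε1 : ε < 1 := lt_of_le_of_lt (min_le_left _ _) (by norm_num)
    have hεK : ε * K ≤ δ / 2 := by
      have h := mul_le_mul_of_nonneg_right (min_le_right (1/2 : ℝ) (δ / (2 * K))) hK0.le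
      have h' : δ / (2 * K) * K = δ / 2 := by
        field_simp
      linarith [h, h']
    have hAe := hA ε hε0 hε1
    clear_value δ K ε
    nlinarith [sq_nonneg ε, sq_nonneg l, hε0.le]
  have hC2 : 72 * L ^ 2 * l ≤ 1 := by
    by_contra hcon
    push_neg at hcon
    set δ : ℝ := 72 * L ^ 2 * l - 1 with hδdef
    have hδ0 : 0 < δ := by linarith
    set K : ℝ := 3 + 72 * L ^ 2 with hKdef
    have hK0 : 0 < K := by nlinarith [sq_nonneg L]
    set ε : ℝ := min (1 / 36) (δ / (2 * K)) with hεdef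
    have hε0 : 0 < ε := lt_min (by norm_num) (by positivity)
    have hε1 : ε < 1 / 18 := lt_of_le_of_lt (min_le_left _ _) (by norm_num)
    have hε1' : ε ≤ 1 := le_trans (min_le_left _ _) (by norm_num)
    have hεK : ε * K ≤ δ / 2 := by
      have h := mul_le_mul_of_nonneg_right (min_le_right (1/36 : ℝ) (δ / (2 * K))) hK0.le
      have h' : δ / (2 * K) * K = δ / 2 := by
        field_simp
      linarith [h, h']
    have hε2 : ε ^ 2 ≤ ε := pow_le_of_le_one hε0.le hε1' (by norm_num)
    have hBe := hB ε hε0 hε1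
    clear_value δ K ε
    have hd : δ ≤ ε * K := by nlinarith [sq_nonneg ε, sq_nonneg L, hε0.le, hε2]
    linarith
  -- Step D : l = L = 1/(2·3^{2/3})
  have hlL' : L ≤ l := by nlinarith [mul_pos hl0 hL0]
  have hEq : l = L := le_antisymm hlL hlL'
  have hL3 : L ^ 3 = 1 / 72 := by
    rw [hEq] at hC1 hC2
    nlinarith
  set T : ℝ := 1 / (2 * (3 : ℝ) ^ ((2 : ℝ) / 3)) with hTdef
  have h3pow : ((3 : ℝ) ^ ((2 : ℝ) / 3)) ^ 3 = 9 := by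
    rw [← Real.rpow_natCast ((3:ℝ) ^ ((2:ℝ)/3)) 3, ← Real.rpow_mul (by norm_num : (0:ℝ) ≤ 3)]
    norm_num
  have h3pos : 0 < (3 : ℝ) ^ ((2 : ℝ) / 3) := Real.rpow_pos_of_pos (by norm_num) _
  have hT0 : 0 < T := by positivity
  have hT3 : T ^ 3 = 1 / 72 := by
    rw [hTdef, div_pow, mul_pow, h3pow]
    norm_num
  have hLT : L = T := by
    have h1' : L ≤ T := stmt8_cube_le hT0.le (by rw [hL3, hT3])
    have h2' : T ≤ L := stmt8_cube_le hL0.le (by rw [hL3, hT3])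
    linarith
  have hu_tendsto : Tendsto u atTop (nhds T) :=
    tendsto_of_liminf_eq_limsup (by rw [← hldef, hEq, hLT]) (by rw [← hLdef, hLT]) hBddle hBddge
  constructor
  · exact hu_tendsto
  -- second limit
  · have hu1 : Tendsto (fun n : ℕ => u (n + 1)) atTop (nhds T) :=
      hu_tendsto.comp (tendsto_add_atTop_nat 1)
    have hratio : Tendsto (fun n : ℕ => p (n + 1) ^ 2 / p n ^ 2) atTop (nhds 1) := by
      have hbase : Tendsto (fun n : ℕ => ((n : ℝ) + 1) / (n : ℝ)) atTop (nhds 1) := by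
        have h0 : Tendsto (fun n : ℕ => 1 + 1 / (n : ℝ)) atTop (nhds 1) := by
          have := tendsto_one_div_atTop_nhds_zero_nat (𝕜 := ℝ)
          simpa using (tendsto_const_nhds (x := (1:ℝ)) (f := atTop)).add this
        apply h0.congr'
        filter_upwards [eventually_ge_atTop 1] with n hn
        have hn0 : (n : ℝ) ≠ 0 := by positivity
        field_simp
      have hcont : ContinuousAt (fun x : ℝ => x ^ ((2 : ℝ) / 3)) 1 :=
        Real.continuousAt_rpow_const 1 _ (Or.inl one_ne_zero)
      have := (hcont.tendsto.comp hbase)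
      rw [Real.one_rpow] at this
      apply this.congr'
      filter_upwards [eventually_ge_atTop 1] with n hn
      have hn0 : (0 : ℝ) < (n : ℝ) := by exact_mod_cast hn
      show (((n : ℝ) + 1) / (n : ℝ)) ^ ((2 : ℝ) / 3) = p (n + 1) ^ 2 / p n ^ 2
      rw [← hq n, ← hq (n + 1), Real.div_rpow (by positivity) hn0.le]
      push_cast
      ring_nf
    have hv2 : Tendsto (fun n : ℕ => (b n / (n : ℝ) ^ ((1 : ℝ) / 3)) ^ 2) atTop
        (nhds (2 * T)) := by
      have hlim : Tendsto (fun n : ℕ => u n + u (n + 1) * (p (n + 1) ^ 2 / p n ^ 2)) atTop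
          (nhds (T + T * 1)) := hu_tendsto.add (hu1.mul hratio)
      have : T + T * 1 = 2 * T := by ring
      rw [this] at hlim
      apply hlim.congr'
      filter_upwards [eventually_ge_atTop 1] with n hn
      have hpn := hppos n hn
      have hpn1 := hppos (n + 1) (by omega)
      have hb2 : b n ^ 2 = a n + a (n + 1) := (h1 n).symm
      show u n + u (n + 1) * (p (n + 1) ^ 2 / p n ^ 2) = (b n / (n : ℝ) ^ ((1 : ℝ) / 3)) ^ 2
      rw [hudef]
      simp only
      rw [hq n, hq (n + 1)]
      rw [show (n : ℝ) ^ ((1 : ℝ) / 3) = p n from rfl, div_pow, hb2]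
      field_simp
    have hsqrt : Tendsto (fun n : ℕ => Real.sqrt ((b n / (n : ℝ) ^ ((1 : ℝ) / 3)) ^ 2)) atTop
        (nhds (Real.sqrt (2 * T))) :=
      (Real.continuous_sqrt.continuousAt.tendsto).comp hv2
    have hval : Real.sqrt (2 * T) = (3 : ℝ) ^ (-(1 : ℝ) / 3) := by
      have h2T : 2 * T = (3 : ℝ) ^ (-((2 : ℝ) / 3)) := by
        rw [hTdef, Real.rpow_neg (by norm_num : (0:ℝ) ≤ 3)]
        field_simp
      rw [h2T, Real.sqrt_eq_rpow, ← Real.rpow_mul (by norm_num : (0:ℝ) ≤ 3)]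
      norm_num
    rw [← hval]
    apply hsqrt.congr
    intro n
    exact Real.sqrt_sq (div_nonneg (hbpos n).le (Real.rpow_nonneg (Nat.cast_nonneg n) _))
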